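/- Let (A, m) be a Noetherian local ring, let n ≥ 1, and suppose z ∈ m^{n-1} \ m^n satisfies z·m ⊆ m^{n+1}. Then the ideal I = (z) + m^n satisfies μ(I) = μ(m^n) + 1, where μ denotes the minimal number of generators. In particular, m^n does not have the Rees property. -/

import Mathlib

open IsLocalRing

/-- `mu I` is the minimal number of generators of the ideal `I`. -/
noncomputable def mu {A : Type*} [CommRing A] (I : Ideal A) : ℕ :=
  sInf {n | ∃ s : Finset A, s.card = n ∧ Ideal.span (s : Set A) = I}

lemma mu_le {A : Type*} [CommRing A] {I : Ideal A} {s : Finset A}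
    (h : Ideal.span (s : Set A) = I) : mu I ≤ s.card :=
  Nat.sInf_le ⟨s, rfl, h⟩

lemma exists_span_card_eq_mu {A : Type*} [CommRing A] [IsNoetherianRing A] (I : Ideal A) :
    ∃ s : Finset A, s.card = mu I ∧ Ideal.span (s : Set A) = I := by
  have hfg : I.FG := IsNoetherian.noetherian I
  obtain ⟨s, hs⟩ := hfg
  exact Nat.sInf_mem (⟨s.card, s, rfl, hs⟩ :
    Set.Nonempty {n | ∃ s : Finset A, s.card = n ∧ Ideal.span (s : Set A) = I})

/-- If `z ∈ m^{n-1} \ m^n` satisfies `z·m ⊆ m^{n+1}`, then `I = (z) + m^n`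
satisfies `μ(I) = μ(m^n) + 1`; in particular `m^n` fails the Rees property. -/
theorem stmt0 {A : Type*} [CommRing A] [IsNoetherianRing A] [IsLocalRing A]
    (n : ℕ) (hn : 1 ≤ n) (z : A)
    (hz1 : z ∈ maximalIdeal A ^ (n - 1)) (hz2 : z ∉ maximalIdeal A ^ n)
    (hz3 : ∀ a ∈ maximalIdeal A, z * a ∈ maximalIdeal A ^ (n + 1)) :
    mu (Ideal.span {z} ⊔ maximalIdeal A ^ n) = mu (maximalIdeal A ^ n) + 1 ∧
    ¬ (∀ J : Ideal A, maximalIdeal A ^ n ≤ J → mu J ≤ mu (maximalIdeal A ^ n)) := by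
  classical
  set m : Ideal A := maximalIdeal A with hm
  set I : Ideal A := Ideal.span {z} ⊔ m ^ n with hI
  -- Easy direction: mu I ≤ mu (m^n) + 1
  have h_le : mu I ≤ mu (m ^ n) + 1 := by
    obtain ⟨t, htc, hts⟩ := exists_span_card_eq_mu (m ^ n)
    have hspan : Ideal.span ((insert z t : Finset A) : Set A) = I := by
      rw [Finset.coe_insert, Ideal.span_insert, hts]
    calc mu I ≤ (insert z t).card := mu_le hspan
      _ ≤ t.card + 1 := Finset.card_insert_le _ _
      _ = mu (m ^ n) + 1 := by rw [htc]
  -- Hard direction: mu (m^n) + 1 ≤ mu I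
  have h_ge : mu (m ^ n) + 1 ≤ mu I := by
    obtain ⟨s, hsc, hss⟩ := exists_span_card_eq_mu I
    -- decompose each generator as a*z + (element of m^n)
    have hdecomp : ∀ x ∈ s, ∃ a : A, x - a * z ∈ m ^ n := by
      intro x hx
      have hxI : x ∈ I := hss ▸ Ideal.subset_span hx
      rw [hI, Submodule.mem_sup] at hxI
      obtain ⟨y, hy, w, hw, rfl⟩ := hxI
      rw [Ideal.mem_span_singleton'] at hy
      obtain ⟨a, rfl⟩ := hy
      exact ⟨a, by simpa using hw⟩
    choose! a ha using hdecomp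
    -- z ∈ I = span s
    have hzI : z ∈ Ideal.span (s : Set A) := hss ▸ le_sup_left (a := Ideal.span {z})
      (Ideal.mem_span_singleton_self z)
    rw [Ideal.span, Submodule.mem_span_finset] at hzI
    obtain ⟨c, -, hc⟩ := hzI
    -- the coefficient sum is a unit for at least one generator
    have hkey : (1 - ∑ i ∈ s, c i * a i) * z ∈ m ^ n := by
      have h1 : ∑ i ∈ s, c i * (i - a i * z)
          = (∑ i ∈ s, c i • i) - (∑ i ∈ s, c i * a i) * z := by
        rw [Finset.sum_mul, ← Finset.sum_sub_distrib]
        exact Finset.sum_congr rfl fun i _ => by simp only [smul_eq_mul]; ring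
      have heq2 : (1 - ∑ i ∈ s, c i * a i) * z = ∑ i ∈ s, c i * (i - a i * z) := by
        rw [h1, hc]; ring
      rw [heq2]
      exact Ideal.sum_mem _ fun i hi => Ideal.mul_mem_left _ _ (ha i hi)
    have hSm : ¬ (∑ i ∈ s, c i * a i) ∈ m := by
      intro hS
      have hu : IsUnit (1 - ∑ i ∈ s, c i * a i) := by
        rw [← IsLocalRing.notMem_maximalIdeal]
        intro h1
        have : (1 : A) ∈ m := by
          have := Ideal.add_mem m h1 hS
          simpa using this
        exact (IsLocalRing.notMem_maximalIdeal.mpr isUnit_one) this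
      exact hz2 ((Ideal.unit_mul_mem_iff_mem _ hu).mp hkey)
    obtain ⟨w, hws, hwm⟩ : ∃ w ∈ s, ¬ (c w * a w) ∈ m := by
      by_contra h
      push_neg at h
      exact hSm (Ideal.sum_mem _ h)
    have haw : IsUnit (a w) := by
      rw [← IsLocalRing.notMem_maximalIdeal]
      exact fun h => hwm (Ideal.mul_mem_left _ _ h)
    set α : Aˣ := haw.unit with hα
    have hαa : (↑α : A) = a w := rfl
    have hαinv : (↑α⁻¹ : A) * a w = 1 := by rw [← hαa]; exact α.inv_mul
    -- the modified generators
    set u : A → A := fun x => x - (a x * ↑α⁻¹) * w with hu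
    have hum : ∀ x ∈ s.erase w, u x ∈ m ^ n := by
      intro x hx
      have hx' : x ∈ s := Finset.mem_of_mem_erase hx
      have h1 : x - a x * z ∈ m ^ n := ha x hx'
      have h2 : w - a w * z ∈ m ^ n := ha w hws
      have : u x = (x - a x * z) - (a x * ↑α⁻¹) * (w - a w * z) := by
        rw [hu]
        have : a x * ↑α⁻¹ * (a w * z) = a x * z := by
          rw [show a x * ↑α⁻¹ * (a w * z) = (↑α⁻¹ * a w) * (a x * z) by ring, hαinv, one_mul]
        simp only [mul_sub]
        rw [this]
        ring
      rw [this]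
      exact Ideal.sub_mem _ h1 (Ideal.mul_mem_left _ _ h2)
    set s' : Finset A := (s.erase w).image u with hs'
    have hs'sub : Ideal.span (s' : Set A) ≤ m ^ n := by
      rw [Ideal.span_le]
      intro x hx
      simp only [hs', Finset.coe_image, Set.mem_image, Finset.mem_coe] at hx
      obtain ⟨y, hy, rfl⟩ := hx
      exact hum y hy
    -- m^n ≤ span s' ⊔ m • m^n
    have hNak : m ^ n ≤ Ideal.span (s' : Set A) ⊔ m • (m ^ n : Ideal A) := by
      intro x hx
      have hxI : x ∈ Ideal.span (s : Set A) := hss ▸ le_sup_right (b := m ^ n) hx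
      rw [Ideal.span, Submodule.mem_span_finset] at hxI
      obtain ⟨c', -, hc'⟩ := hxI
      simp only [smul_eq_mul] at hc'
      -- split off w
      have hsplit : x = c' w * w + ∑ i ∈ s.erase w, c' i * i := by
        rw [← hc']
        exact (Finset.add_sum_erase s (fun i => c' i * i) hws).symm
      set D : A := c' w + ∑ i ∈ s.erase w, c' i * (a i * ↑α⁻¹) with hD
      have hrw : x = D * w + ∑ i ∈ s.erase w, c' i * u i := by
        have hsum : ∑ i ∈ s.erase w, c' i * u i
            = ∑ i ∈ s.erase w, c' i * i - (∑ i ∈ s.erase w, c' i * (a i * ↑α⁻¹)) * w := by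
          rw [Finset.sum_mul, ← Finset.sum_sub_distrib]
          exact Finset.sum_congr rfl fun i _ => by rw [hu]; ring
        rw [hsplit, hsum, hD]; ring
      have hsum_mem : ∑ i ∈ s.erase w, c' i * u i ∈ Ideal.span (s' : Set A) := by
        refine Ideal.sum_mem _ fun i hi => Ideal.mul_mem_left _ _ ?_
        exact Ideal.subset_span (Finset.mem_coe.mpr (Finset.mem_image_of_mem u hi))
      have hDw_mn : D * w ∈ m ^ n := by
        have : D * w = x - ∑ i ∈ s.erase w, c' i * u i := by rw [hrw]; ring
        rw [this]
        exact Ideal.sub_mem _ hx (hs'sub hsum_mem)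
      -- show D ∈ m
      have hDm : D ∈ m := by
        by_contra hD'
        have hDu : IsUnit D := IsLocalRing.notMem_maximalIdeal.mp hD'
        have hDau : IsUnit (D * a w) := hDu.mul haw
        have h2 : w - a w * z ∈ m ^ n := ha w hws
        have : (D * a w) * z ∈ m ^ n := by
          have : (D * a w) * z = D * w - D * (w - a w * z) := by ring
          rw [this]
          exact Ideal.sub_mem _ hDw_mn (Ideal.mul_mem_left _ _ h2)
        exact hz2 ((Ideal.unit_mul_mem_iff_mem _ hDau).mp this)
      -- D * w ∈ m^{n+1} = m • m^n
      have hsm : m • (m ^ n : Ideal A) = m ^ (n + 1) := by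
        rw [smul_eq_mul, pow_succ, mul_comm]
      have hDw : D * w ∈ m • (m ^ n : Ideal A) := by
        rw [hsm]
        have h2 : w - a w * z ∈ m ^ n := ha w hws
        have hterm1 : z * (D * a w) ∈ m ^ (n + 1) := hz3 _ (Ideal.mul_mem_right _ _ hDm)
        have hterm2 : D * (w - a w * z) ∈ m ^ (n + 1) := by
          rw [pow_succ, mul_comm]
          exact Ideal.mul_mem_mul hDm h2
        have : D * w = z * (D * a w) + D * (w - a w * z) := by ring
        rw [this]
        exact Ideal.add_mem _ hterm1 hterm2
      rw [hrw]
      exact Submodule.add_mem _ (Submodule.mem_sup_right hDw)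
        (Submodule.mem_sup_left hsum_mem)
    -- Nakayama
    have hjac : m ≤ Ideal.jacobson ⊥ := (IsLocalRing.jacobson_eq_maximalIdeal ⊥ bot_ne_top).ge
    have hfg : (m ^ n : Ideal A).FG := IsNoetherian.noetherian _
    have hle : (m ^ n : Ideal A) ≤ Ideal.span (s' : Set A) :=
      Submodule.le_of_le_smul_of_le_jacobson_bot hfg hjac hNak
    have hspan' : Ideal.span (s' : Set A) = m ^ n := le_antisymm hs'sub hle
    have h1 : mu (m ^ n) ≤ s'.card := mu_le hspan'
    have h2 : s'.card ≤ (s.erase w).card := Finset.card_image_le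
    have h3 : (s.erase w).card = s.card - 1 := Finset.card_erase_of_mem hws
    have h4 : 1 ≤ s.card := Finset.card_pos.mpr ⟨w, hws⟩
    omega
  have heq : mu I = mu (m ^ n) + 1 := le_antisymm h_le h_ge
  refine ⟨heq, fun h => ?_⟩
  have := h I le_sup_right
  omega
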